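/- Let (H,R,χ) be a pre-Cartier quasitriangular Hopf algebra and γ = S(χⁱ)χᵢ its Casimir element. Then γ is central in H. -/

import Mathlib

open scoped TensorProduct

noncomputable section AuxCasimir
open Coalgebra HopfAlgebra

variable {k H : Type*} [CommRing k] [Ring H] [HopfAlgebra k H]

local notation "𝒮" => (HopfAlgebra.antipode (R := k) (A := H))
local notation "ε" => (Coalgebra.counit (R := k) (A := H))

lemma sum_counit_smul_left {a : H} {ι : Type*} (r : Coalgebra.Repr k a ι) :
    ∑ i ∈ r.index, ε (r.right i) • r.left i = a := by
  have h := congrArg (TensorProduct.rid k H) (Coalgebra.sum_tmul_counit_eq r)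
  rw [map_sum] at h
  simp only [TensorProduct.rid_tmul] at h
  simpa using h

lemma sum_counit_smul_right {a : H} {ι : Type*} (r : Coalgebra.Repr k a ι) :
    ∑ i ∈ r.index, ε (r.left i) • r.right i = a := by
  have h := congrArg (TensorProduct.lid k H) (Coalgebra.sum_counit_tmul_eq r)
  rw [map_sum] at h
  simp only [TensorProduct.lid_tmul] at h
  simpa using h

/-- product of two representations -/
def Coalgebra.Repr.mulProd {a b : H} {ι κ : Type*} (ra : Coalgebra.Repr k a ι)
    (rb : Coalgebra.Repr k b κ) :
    Coalgebra.Repr k (a * b) (ι × κ) where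
  index := ra.index ×ˢ rb.index
  left := fun p => ra.left p.1 * rb.left p.2
  right := fun p => ra.right p.1 * rb.right p.2
  eq := by
    rw [Finset.sum_product, Bialgebra.comul_mul, ← ra.eq, ← rb.eq, Finset.sum_mul_sum]
    simp [Algebra.TensorProduct.tmul_mul_tmul]

/-- `x ⊗ (y ⊗ z) ↦ φ x * (ψ y * ω z)` as a linear map. -/
def tri (φ ψ ω : H →ₗ[k] H) : H ⊗[k] (H ⊗[k] H) →ₗ[k] H :=
  LinearMap.mul' k H ∘ₗ TensorProduct.map φ (LinearMap.mul' k H ∘ₗ TensorProduct.map ψ ω)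

@[simp] lemma tri_tmul (φ ψ ω : H →ₗ[k] H) (x y z : H) :
    tri φ ψ ω (x ⊗ₜ (y ⊗ₜ z)) = φ x * (ψ y * ω z) := by
  simp [tri]

lemma sum_tri {a : H} {ι κ Λ : Type*} (r : Coalgebra.Repr k a ι)
    (r1 : (i : ι) → Coalgebra.Repr k (r.left i) κ)
    (r2 : (i : ι) → Coalgebra.Repr k (r.right i) Λ)
    (φ ψ ω : H →ₗ[k] H) :
    ∑ i ∈ r.index, ∑ p ∈ (r1 i).index,
      φ ((r1 i).left p) * (ψ ((r1 i).right p) * ω (r.right i))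
    = ∑ i ∈ r.index, ∑ p ∈ (r2 i).index,
      φ (r.left i) * (ψ ((r2 i).left p) * ω ((r2 i).right p)) := by
  have h := congrArg (tri φ ψ ω) (Coalgebra.sum_tmul_tmul_eq r r1 r2)
  simpa only [map_sum, tri_tmul] using h

lemma sum_swap4 {ιa ιb κa κb M : Type*} [AddCommMonoid M] (sa : Finset ιa) (sb : Finset ιb)
    (ta : ιa → Finset κa) (tb : ιb → Finset κb) (f : ιa → κa → ιb → κb → M) :
    ∑ j ∈ sb, ∑ q ∈ tb j, ∑ i ∈ sa, ∑ p ∈ ta i, f i p j q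
    = ∑ i ∈ sa, ∑ p ∈ ta i, ∑ j ∈ sb, ∑ q ∈ tb j, f i p j q := by
  calc ∑ j ∈ sb, ∑ q ∈ tb j, ∑ i ∈ sa, ∑ p ∈ ta i, f i p j q
      = ∑ j ∈ sb, ∑ i ∈ sa, ∑ q ∈ tb j, ∑ p ∈ ta i, f i p j q :=
        Finset.sum_congr rfl fun j _ => Finset.sum_comm
    _ = ∑ j ∈ sb, ∑ i ∈ sa, ∑ p ∈ ta i, ∑ q ∈ tb j, f i p j q :=
        Finset.sum_congr rfl fun j _ => Finset.sum_congr rfl fun i _ => Finset.sum_comm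
    _ = ∑ i ∈ sa, ∑ j ∈ sb, ∑ p ∈ ta i, ∑ q ∈ tb j, f i p j q := Finset.sum_comm
    _ = ∑ i ∈ sa, ∑ p ∈ ta i, ∑ j ∈ sb, ∑ q ∈ tb j, f i p j q :=
        Finset.sum_congr rfl fun i _ => Finset.sum_comm

lemma antipode_mul_rev (a b : H) : 𝒮 (a * b) = 𝒮 b * 𝒮 a := by
  let ra := Coalgebra.Repr.arbitrary k a
  let rb := Coalgebra.Repr.arbitrary k b
  let ra1 : (i : H × H) → Coalgebra.Repr k (ra.left i) (H × H) := fun i => Coalgebra.Repr.arbitrary k _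
  let ra2 : (i : H × H) → Coalgebra.Repr k (ra.right i) (H × H) := fun i => Coalgebra.Repr.arbitrary k _
  let rb1 : (j : H × H) → Coalgebra.Repr k (rb.left j) (H × H) := fun j => Coalgebra.Repr.arbitrary k _
  let rb2 : (j : H × H) → Coalgebra.Repr k (rb.right j) (H × H) := fun j => Coalgebra.Repr.arbitrary k _
  have swapA : ∀ y1 y2 y3 : H,
      (∑ i ∈ ra.index, ∑ p ∈ (ra1 i).index,
        𝒮 ((ra1 i).left p * y1) * ((ra1 i).right p * (y2 * 𝒮 y3) * 𝒮 (ra.right i)))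
      = ∑ i ∈ ra.index, ∑ p ∈ (ra2 i).index,
        𝒮 (ra.left i * y1) * ((ra2 i).left p * (y2 * 𝒮 y3) * 𝒮 ((ra2 i).right p)) := by
    intro y1 y2 y3
    have h := sum_tri ra ra1 ra2 (𝒮 ∘ₗ LinearMap.mulRight k y1)
      (LinearMap.mulRight k (y2 * 𝒮 y3)) 𝒮
    simpa only [LinearMap.comp_apply, LinearMap.mulRight_apply] using h
  have hab : ∀ (i : H × H) (j : H × H),
      (∑ p ∈ (ra1 i).index, ∑ q ∈ (rb1 j).index,
        𝒮 ((ra1 i).left p * (rb1 j).left q) * ((ra1 i).right p * (rb1 j).right q))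
      = ε (ra.left i * rb.left j) • (1 : H) := by
    intro i j
    have h := sum_antipode_mul_eq_smul (R := k) ((ra1 i).mulProd (rb1 j))
    simpa only [Coalgebra.Repr.mulProd, Finset.sum_product] using h
  calc 𝒮 (a * b)
      = ∑ i ∈ ra.index, ∑ j ∈ rb.index,
          (ε (ra.right i) * ε (rb.right j)) • 𝒮 (ra.left i * rb.left j) := by
        conv_lhs => rw [← sum_counit_smul_left ra, ← sum_counit_smul_left rb]
        rw [Finset.sum_mul_sum, map_sum]
        refine Finset.sum_congr rfl fun i _ => ?_
        rw [map_sum]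
        refine Finset.sum_congr rfl fun j _ => ?_
        rw [smul_mul_assoc, mul_smul_comm, smul_smul, map_smul]
    _ = ∑ i ∈ ra.index, ∑ j ∈ rb.index, ∑ p ∈ (ra2 i).index, ∑ q ∈ (rb2 j).index,
          𝒮 (ra.left i * rb.left j) *
            ((ra2 i).left p * ((rb2 j).left q * 𝒮 ((rb2 j).right q)) * 𝒮 ((ra2 i).right p)) := by
        refine Finset.sum_congr rfl fun i _ => Finset.sum_congr rfl fun j _ => ?_
        have hq : ∀ x2 x3 A : H,
            (∑ q ∈ (rb2 j).index, A * (x2 * ((rb2 j).left q * 𝒮 ((rb2 j).right q)) * x3))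
            = ε (rb.right j) • (A * (x2 * x3)) := by
          intro x2 x3 A
          simp only [← Finset.mul_sum, ← Finset.sum_mul]
          rw [sum_mul_antipode_eq_smul (rb2 j)]
          simp [mul_smul_comm, smul_mul_assoc]
        rw [Finset.sum_congr rfl fun p _ => hq ((ra2 i).left p) (𝒮 ((ra2 i).right p))
          (𝒮 (ra.left i * rb.left j))]
        simp only [← Finset.smul_sum, ← Finset.mul_sum]
        rw [sum_mul_antipode_eq_smul (ra2 i)]
        simp only [mul_smul_comm, smul_smul, mul_one]
        rw [mul_comm]
    _ = ∑ i ∈ ra.index, ∑ p ∈ (ra2 i).index, ∑ j ∈ rb.index, ∑ q ∈ (rb2 j).index,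
          𝒮 (ra.left i * rb.left j) *
            ((ra2 i).left p * ((rb2 j).left q * 𝒮 ((rb2 j).right q)) * 𝒮 ((ra2 i).right p)) :=
        Finset.sum_congr rfl fun i _ => Finset.sum_comm
    _ = ∑ j ∈ rb.index, ∑ q ∈ (rb2 j).index, ∑ i ∈ ra.index, ∑ p ∈ (ra2 i).index,
          𝒮 (ra.left i * rb.left j) *
            ((ra2 i).left p * ((rb2 j).left q * 𝒮 ((rb2 j).right q)) * 𝒮 ((ra2 i).right p)) :=
        (sum_swap4 ra.index rb.index (fun i => (ra2 i).index) (fun j => (rb2 j).index) _).symm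
    _ = ∑ j ∈ rb.index, ∑ q ∈ (rb2 j).index, ∑ i ∈ ra.index, ∑ p ∈ (ra1 i).index,
          𝒮 ((ra1 i).left p * rb.left j) *
            ((ra1 i).right p * ((rb2 j).left q * 𝒮 ((rb2 j).right q)) * 𝒮 (ra.right i)) :=
        Finset.sum_congr rfl fun j _ => Finset.sum_congr rfl fun q _ =>
          (swapA (rb.left j) ((rb2 j).left q) ((rb2 j).right q)).symm
    _ = ∑ i ∈ ra.index, ∑ p ∈ (ra1 i).index, ∑ j ∈ rb.index, ∑ q ∈ (rb2 j).index,
          𝒮 ((ra1 i).left p * rb.left j) *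
            ((ra1 i).right p * ((rb2 j).left q * 𝒮 ((rb2 j).right q)) * 𝒮 (ra.right i)) :=
        sum_swap4 ra.index rb.index (fun i => (ra1 i).index) (fun j => (rb2 j).index) _
    _ = ∑ i ∈ ra.index, ∑ p ∈ (ra1 i).index, ∑ j ∈ rb.index, ∑ q ∈ (rb2 j).index,
          𝒮 ((ra1 i).left p * rb.left j) *
            (((ra1 i).right p * (rb2 j).left q) * (𝒮 ((rb2 j).right q) * 𝒮 (ra.right i))) := by
        refine Finset.sum_congr rfl fun i _ => Finset.sum_congr rfl fun p _ =>
          Finset.sum_congr rfl fun j _ => Finset.sum_congr rfl fun q _ => ?_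
        simp only [mul_assoc]
    _ = ∑ i ∈ ra.index, ∑ p ∈ (ra1 i).index, ∑ j ∈ rb.index, ∑ q ∈ (rb1 j).index,
          𝒮 ((ra1 i).left p * (rb1 j).left q) *
            (((ra1 i).right p * (rb1 j).right q) * (𝒮 (rb.right j) * 𝒮 (ra.right i))) := by
        refine Finset.sum_congr rfl fun i _ => Finset.sum_congr rfl fun p _ => ?_
        have h := sum_tri rb rb1 rb2 (𝒮 ∘ₗ LinearMap.mulLeft k ((ra1 i).left p))
          (LinearMap.mulLeft k ((ra1 i).right p))
          (LinearMap.mulRight k (𝒮 (ra.right i)) ∘ₗ 𝒮)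
        simpa only [LinearMap.comp_apply, LinearMap.mulLeft_apply,
          LinearMap.mulRight_apply] using h.symm
    _ = ∑ i ∈ ra.index, ∑ j ∈ rb.index, ∑ p ∈ (ra1 i).index, ∑ q ∈ (rb1 j).index,
          𝒮 ((ra1 i).left p * (rb1 j).left q) *
            (((ra1 i).right p * (rb1 j).right q) * (𝒮 (rb.right j) * 𝒮 (ra.right i))) :=
        Finset.sum_congr rfl fun i _ => Finset.sum_comm
    _ = ∑ i ∈ ra.index, ∑ j ∈ rb.index,
          (ε (ra.left i) * ε (rb.left j)) • (𝒮 (rb.right j) * 𝒮 (ra.right i)) := by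
        refine Finset.sum_congr rfl fun i _ => Finset.sum_congr rfl fun j _ => ?_
        rw [Finset.sum_congr rfl fun p _ => Finset.sum_congr rfl fun q _ =>
          (mul_assoc (𝒮 ((ra1 i).left p * (rb1 j).left q))
            ((ra1 i).right p * (rb1 j).right q)
            (𝒮 (rb.right j) * 𝒮 (ra.right i))).symm]
        simp only [← Finset.sum_mul]
        rw [hab i j, smul_mul_assoc, one_mul, Bialgebra.counit_mul]
    _ = ∑ i ∈ ra.index, ∑ j ∈ rb.index,
          (ε (rb.left j) • 𝒮 (rb.right j)) * (ε (ra.left i) • 𝒮 (ra.right i)) := by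
        refine Finset.sum_congr rfl fun i _ => Finset.sum_congr rfl fun j _ => ?_
        simp [smul_mul_assoc, mul_smul_comm, smul_smul, mul_comm]
    _ = (∑ j ∈ rb.index, ε (rb.left j) • 𝒮 (rb.right j)) *
          (∑ i ∈ ra.index, ε (ra.left i) • 𝒮 (ra.right i)) := by
        simp only [← Finset.sum_mul, ← Finset.mul_sum]
    _ = 𝒮 b * 𝒮 a := by
        simp only [← map_smul, ← map_sum, sum_counit_smul_right]

variable (k H) in
/-- `x ⊗ y ↦ S(x) y`. -/
def Gmap : H ⊗[k] H →ₗ[k] H :=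
  LinearMap.mul' k H ∘ₗ TensorProduct.map 𝒮 LinearMap.id

@[simp] lemma Gmap_tmul (x y : H) : Gmap k H (x ⊗ₜ y) = 𝒮 x * y := by
  simp [Gmap]

lemma Gmap_mul_tmul (u : H ⊗[k] H) (x y : H) :
    Gmap k H (u * (x ⊗ₜ y)) = 𝒮 x * Gmap k H u * y := by
  induction u using TensorProduct.induction_on with
  | zero => simp
  | tmul a b =>
      simp [Gmap, Algebra.TensorProduct.tmul_mul_tmul, antipode_mul_rev, mul_assoc]
  | add u v hu hv => simp [add_mul, hu, hv, mul_add]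

lemma Gmap_comul (h : H) :
    Gmap k H (Coalgebra.comul (R := k) h) = algebraMap k H (ε h) := by
  have h1 := HopfAlgebra.mul_antipode_rTensor_comul_apply (R := k) (a := h)
  simpa [Gmap, LinearMap.rTensor] using h1

lemma Gmap_comul_mul (h : H) (t : H ⊗[k] H) :
    Gmap k H (Coalgebra.comul (R := k) h * t) = ε h • Gmap k H t := by
  induction t using TensorProduct.induction_on with
  | zero => simp
  | tmul x y =>
      rw [Gmap_mul_tmul, Gmap_comul, Gmap_tmul, Algebra.smul_def, ← Algebra.commutes,
        mul_assoc]
  | add u v hu hv => simp [mul_add, hu, hv]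

lemma key_gamma {χ : H ⊗[k] H}
    (hχ : ∀ h : H, χ * Coalgebra.comul (R := k) h = Coalgebra.comul (R := k) h * χ)
    (h : H) {ι : Type*} (r : Coalgebra.Repr k h ι) :
    ∑ i ∈ r.index, 𝒮 (r.left i) * Gmap k H χ * r.right i = ε h • Gmap k H χ := by
  have h1 : Gmap k H (χ * Coalgebra.comul (R := k) h)
      = ∑ i ∈ r.index, 𝒮 (r.left i) * Gmap k H χ * r.right i := by
    rw [← r.eq, Finset.mul_sum, map_sum]
    exact Finset.sum_congr rfl fun i _ => Gmap_mul_tmul χ _ _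
  rw [← h1, hχ h, Gmap_comul_mul]

lemma gamma_central_aux {χ : H ⊗[k] H}
    (hχ : ∀ h : H, χ * Coalgebra.comul (R := k) h = Coalgebra.comul (R := k) h * χ)
    (h : H) : Gmap k H χ * h = h * Gmap k H χ := by
  set γ := Gmap k H χ with hγ
  let rh := Coalgebra.Repr.arbitrary k h
  let rh1 : (i : H × H) → Coalgebra.Repr k (rh.left i) (H × H) := fun i => Coalgebra.Repr.arbitrary k _
  let rh2 : (i : H × H) → Coalgebra.Repr k (rh.right i) (H × H) := fun i => Coalgebra.Repr.arbitrary k _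
  refine Eq.symm ?_
  calc h * γ
      = ∑ i ∈ rh.index, rh.left i * (ε (rh.right i) • γ) := by
        conv_lhs => rw [← sum_counit_smul_left rh]
        rw [Finset.sum_mul]
        exact Finset.sum_congr rfl fun i _ => by rw [smul_mul_assoc, ← mul_smul_comm]
    _ = ∑ i ∈ rh.index, rh.left i *
          (∑ p ∈ (rh2 i).index, 𝒮 ((rh2 i).left p) * γ * (rh2 i).right p) := by
        refine Finset.sum_congr rfl fun i _ => ?_
        rw [key_gamma hχ (rh.right i) (rh2 i)]
    _ = ∑ i ∈ rh.index, ∑ p ∈ (rh2 i).index,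
          rh.left i * (𝒮 ((rh2 i).left p) * (γ * (rh2 i).right p)) := by
        refine Finset.sum_congr rfl fun i _ => ?_
        rw [Finset.mul_sum]
        exact Finset.sum_congr rfl fun p _ => by rw [mul_assoc]
    _ = ∑ i ∈ rh.index, ∑ p ∈ (rh1 i).index,
          (rh1 i).left p * (𝒮 ((rh1 i).right p) * (γ * rh.right i)) := by
        have h2 := sum_tri rh rh1 rh2 (LinearMap.id) 𝒮 (LinearMap.mulLeft k γ)
        simpa only [LinearMap.id_apply, LinearMap.mulLeft_apply] using h2.symm
    _ = ∑ i ∈ rh.index,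
          (∑ p ∈ (rh1 i).index, (rh1 i).left p * 𝒮 ((rh1 i).right p)) * (γ * rh.right i) := by
        refine Finset.sum_congr rfl fun i _ => ?_
        rw [Finset.sum_congr rfl fun p _ => (mul_assoc ((rh1 i).left p)
          (𝒮 ((rh1 i).right p)) (γ * rh.right i)).symm, ← Finset.sum_mul]
    _ = ∑ i ∈ rh.index, ε (rh.left i) • (γ * rh.right i) := by
        refine Finset.sum_congr rfl fun i _ => ?_
        rw [sum_mul_antipode_eq_smul (rh1 i), smul_mul_assoc, one_mul]
    _ = γ * h := by
        simp only [← mul_smul_comm]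
        rw [← Finset.mul_sum, sum_counit_smul_right rh]

end AuxCasimir


noncomputable section

variable (k H : Type*) [CommRing k] [Ring H] [HopfAlgebra k H]

/-- leg embedding `a ⊗ b ↦ a ⊗ b ⊗ 1` into `H ⊗ (H ⊗ H)`. -/
def leg12 : H ⊗[k] H →ₐ[k] H ⊗[k] (H ⊗[k] H) :=
  Algebra.TensorProduct.map (AlgHom.id k H) Algebra.TensorProduct.includeLeft

/-- leg embedding `a ⊗ b ↦ 1 ⊗ a ⊗ b`. -/
def leg23 : H ⊗[k] H →ₐ[k] H ⊗[k] (H ⊗[k] H) :=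
  Algebra.TensorProduct.includeRight

/-- leg embedding `a ⊗ b ↦ a ⊗ 1 ⊗ b`. -/
def leg13 : H ⊗[k] H →ₐ[k] H ⊗[k] (H ⊗[k] H) :=
  Algebra.TensorProduct.map (AlgHom.id k H) Algebra.TensorProduct.includeRight

/-- `(Id ⊗ Δ)` as an algebra map `H ⊗ H → H ⊗ (H ⊗ H)`. -/
def idComul : H ⊗[k] H →ₐ[k] H ⊗[k] (H ⊗[k] H) :=
  Algebra.TensorProduct.map (AlgHom.id k H) (Bialgebra.comulAlgHom k H)

/-- `(Δ ⊗ Id)` as an algebra map `H ⊗ H → H ⊗ (H ⊗ H)` (after reassociation). -/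
def comulId : H ⊗[k] H →ₐ[k] H ⊗[k] (H ⊗[k] H) :=
  (Algebra.TensorProduct.assoc k k k H H H).toAlgHom.comp
    (Algebra.TensorProduct.map (Bialgebra.comulAlgHom k H) (AlgHom.id k H))

/-- the flip `a ⊗ b ↦ b ⊗ a` as an algebra map. -/
def swapT : H ⊗[k] H →ₐ[k] H ⊗[k] H := (Algebra.TensorProduct.comm k H H).toAlgHom

/-- A quasitriangular structure on the bialgebra `H`. -/
structure QT where
  R : H ⊗[k] H
  Rinv : H ⊗[k] H
  mul_inv : R * Rinv = 1
  inv_mul : Rinv * R = 1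
  quasi_cocomm : ∀ h : H, swapT k H (Coalgebra.comul (R := k) h) * R = R * Coalgebra.comul (R := k) h
  hex1 : idComul k H R = leg13 k H R * leg12 k H R
  hex2 : comulId k H R = leg13 k H R * leg23 k H R

/-- A pre-Cartier quasitriangular bialgebra structure on `H`. -/
structure PreCartier extends QT k H where
  χ : H ⊗[k] H
  chi_comm : ∀ h : H, χ * Coalgebra.comul (R := k) h = Coalgebra.comul (R := k) h * χ
  chi_hex1 : idComul k H χ = leg12 k H χ + leg12 k H Rinv * leg13 k H χ * leg12 k H R
  chi_hex2 : comulId k H χ = leg23 k H χ + leg23 k H Rinv * leg13 k H χ * leg23 k H R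

/-- the Casimir element `γ = S(χⁱ)χᵢ` of a pre-Cartier quasitriangular Hopf
algebra is central in `H`. -/
theorem casimir_central (P : PreCartier k H) :
    let γ : H := LinearMap.mul' k H
      (TensorProduct.map (HopfAlgebra.antipode k : H →ₗ[k] H) LinearMap.id P.χ)
    ∀ h : H, γ * h = h * γ := by
  intro γ h
  exact gamma_central_aux (χ := P.χ) P.chi_comm h

end
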